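/- For any coprime positive integers a < b, there exists a real θ such that cos aθ + cos bθ ≤ −9/8. -/

import Mathlib

open Real

lemma cos_odd_mul_pi (c : ℕ) (hc : Odd c) : Real.cos (c * π) = -1 := by
  obtain ⟨m, rfl⟩ := hc
  have h : ((2 * m + 1 : ℕ) : ℝ) * π = (m : ℤ) * (2 * π) + π := by push_cast; ring
  rw [h, Real.cos_int_mul_two_pi_add_pi]

lemma key_lemma (u v : ℕ) (hv : 3 ≤ v) (hpar : Odd (u + v)) (hco : Nat.Coprime u v) :
    ∃ θ : ℝ, Real.cos (u * θ) + Real.cos (v * θ) ≤ -9/8 := by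
  obtain ⟨n, hn⟩ := hpar
  set A := Nat.gcdA u v with hA
  set B := Nat.gcdB u v with hB
  have hb : (1 : ℤ) = u * A + v * B := by
    have h := Nat.gcd_eq_gcd_ab u v
    rw [hco] at h
    exact_mod_cast h
  set d : ℤ := (n : ℤ) - u with hd
  have h2d : 2 * d = (v : ℤ) - 1 - u := by
    have : (u : ℤ) + v = 2 * n + 1 := by exact_mod_cast hn
    omega
  set k : ℤ := A * d with hk
  set t : ℤ := -(B * d) with ht
  have hkey : (u : ℤ) * (2 * k + 1) = 2 * v * t + v - 1 := by
    rw [hk, ht]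
    linear_combination (2 * d) * hb.symm + h2d
  have hvR : (0 : ℝ) < (v : ℝ) := by positivity
  refine ⟨(2 * k + 1) * π / v, ?_⟩
  have h1 : (v : ℝ) * ((2 * k + 1) * π / v) = (k : ℤ) * (2 * π) + π := by
    field_simp
  have hkeyR : (u : ℝ) * (2 * k + 1) = 2 * v * t + v - 1 := by exact_mod_cast hkey
  have h2 : (u : ℝ) * ((2 * k + 1) * π / v) = (π - π / v) + (t : ℤ) * (2 * π) := by
    field_simp
    nlinarith [hkeyR, pi_pos]
  rw [h1, h2, Real.cos_int_mul_two_pi_add_pi, Real.cos_add_int_mul_two_pi, Real.cos_pi_sub]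
  have hc : Real.cos (π / 3) ≤ Real.cos (π / v) := by
    apply Real.cos_le_cos_of_nonneg_of_le_pi
    · positivity
    · linarith [pi_pos]
    · have h3v : (3 : ℝ) ≤ (v : ℝ) := by exact_mod_cast hv
      exact div_le_div_of_nonneg_left pi_pos.le (by norm_num) h3v
  rw [Real.cos_pi_div_three] at hc
  linarith

theorem stmt_8 (a b : ℕ) (ha : 0 < a) (hab : a < b) (hgcd : Nat.gcd a b = 1) :
    ∃ θ : ℝ, cos (a * θ) + cos (b * θ) ≤ -9/8 := by
  rcases Nat.even_or_odd (a + b) with he | ho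
  · -- both odd
    have hao : Odd a := by
      rcases Nat.even_or_odd a with ha' | ha'
      · exfalso
        have hbe : Even b := (Nat.even_add.mp he).mp ha'
        have h2 : 2 ∣ Nat.gcd a b := Nat.dvd_gcd ha'.two_dvd hbe.two_dvd
        rw [hgcd] at h2
        omega
      · exact ha'
    have hbo : Odd b := by
      rcases Nat.even_or_odd b with hb' | hb'
      · exfalso
        have hae : Even a := (Nat.even_add.mp he).mpr hb'
        exact (Nat.not_even_iff_odd.mpr hao) hae
      · exact hb'
    exact ⟨π, by rw [cos_odd_mul_pi a hao, cos_odd_mul_pi b hbo]; norm_num⟩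
  · by_cases hb2 : b = 2
    · have ha1 : a = 1 := by omega
      subst ha1; subst hb2
      refine ⟨Real.arccos (-(1/4)), ?_⟩
      have h1 : Real.cos (Real.arccos (-(1/4))) = -(1/4) :=
        Real.cos_arccos (by norm_num) (by norm_num)
      have h2 : Real.cos (2 * Real.arccos (-(1/4))) = 2 * (-(1/4))^2 - 1 := by
        rw [Real.cos_two_mul, h1]
      push_cast
      rw [one_mul, h2, h1]
      norm_num
    · have hb3 : 3 ≤ b := by omega
      exact key_lemma a b hb3 ho hgcd
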